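/- Let r1 > 1 > r2 >= 0 and let (W_n) be given by W_0 = 0, W_{n+1} = W_n + r2 + (r1 - r2)(1 - r2)/(r1 - r2 + W_n). Then for all n >= 1: r2*n < W_n <= r2*n + sqrt(2*(r1 - r2)*(1 - r2)*n) + (r1 - r2). (The edge-game value equals the linear mobility term r2*n plus a sublinear correction of order sqrt(n).) -/
import Mathlib

/-- Auxiliary algebraic step: one induction step of the square-root growth bound. -/
lemma stmt_19_aux (c1 c2 u s s' : ℝ) (hc1 : 0 < c1) (hc2 : 0 < c2) (hcc : c1 ≤ c2 ^ 2)
    (hu : 0 ≤ u) (hub : u ≤ s + c2) (hs : 0 ≤ s) (hs' : s ≤ s')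
    (h2 : s' ^ 2 - s ^ 2 = 2 * c1) :
    u + c1 / (c2 + u) ≤ s' + c2 := by
  have hdu : 0 < c2 + u := by linarith
  have hdb : 0 < c2 + (s + c2) := by linarith
  have key : u + c1 / (c2 + u) ≤ (s + c2) + c1 / (c2 + (s + c2)) := by
    rw [← sub_nonneg]
    have heq : (s + c2) + c1 / (c2 + (s + c2)) - (u + c1 / (c2 + u)) =
        ((s + c2) - u) * ((c2 + u) * (c2 + (s + c2)) - c1) / ((c2 + u) * (c2 + (s + c2))) := by
      field_simp
      ring
    rw [heq]
    apply div_nonneg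
    · apply mul_nonneg (by linarith)
      nlinarith
    · positivity
  have hss : s' ≤ s + 4 * c2 := by
    have h5 : s' ^ 2 ≤ (s + 4 * c2) ^ 2 := by nlinarith
    nlinarith
  have h3 : (s' - s) * (s' + s) = 2 * c1 := by nlinarith
  have h4 : (s' - s) * (s' + s) ≤ (s' - s) * (4 * c2 + 2 * s) :=
    mul_le_mul_of_nonneg_left (by linarith) (by linarith)
  have h6 : c1 / (c2 + (s + c2)) ≤ s' - s := by
    rw [div_le_iff₀ hdb]
    nlinarith
  linarith

/-- Two-sided bound on the edge-game value: the linear mobility term `r2 n` plus a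
sublinear square-root correction. -/
theorem stmt_19 (r1 r2 : ℝ) (hr1 : 1 < r1) (hr2 : 0 ≤ r2) (hr2' : r2 < 1)
    (W : ℕ → ℝ) (h0 : W 0 = 0)
    (hrec : ∀ n, W (n + 1) = W n + r2 + (r1 - r2) * (1 - r2) / (r1 - r2 + W n)) :
    ∀ n : ℕ, 1 ≤ n →
      r2 * n < W n ∧
      W n ≤ r2 * n + Real.sqrt (2 * (r1 - r2) * (1 - r2) * n) + (r1 - r2) := by
  have hc2 : 0 < r1 - r2 := by linarith
  have hc1 : 0 < (r1 - r2) * (1 - r2) := by nlinarith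
  have hcc : (r1 - r2) * (1 - r2) ≤ (r1 - r2) ^ 2 := by nlinarith
  -- weak lower bound for all n
  have hlow : ∀ n : ℕ, r2 * n ≤ W n := by
    intro n
    induction n with
    | zero => simp [h0]
    | succ n ih =>
      have hn : (0:ℝ) ≤ r2 * n := mul_nonneg hr2 (Nat.cast_nonneg n)
      have hden : 0 < r1 - r2 + W n := by linarith
      have hstep : 0 < (r1 - r2) * (1 - r2) / (r1 - r2 + W n) := div_pos hc1 hden
      rw [hrec n]
      push_cast
      linarith
  have hden : ∀ n : ℕ, 0 < r1 - r2 + W n := by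
    intro n
    have hn : (0:ℝ) ≤ r2 * n := mul_nonneg hr2 (Nat.cast_nonneg n)
    have := hlow n
    linarith
  -- upper bound for all n
  have hup : ∀ n : ℕ, W n ≤ r2 * n + Real.sqrt (2 * ((r1 - r2) * (1 - r2)) * n) + (r1 - r2) := by
    intro n
    induction n with
    | zero =>
      have := Real.sqrt_nonneg (2 * ((r1 - r2) * (1 - r2)) * ((0:ℕ):ℝ))
      simp [h0]
      linarith
    | succ n ih =>
      set s := Real.sqrt (2 * ((r1 - r2) * (1 - r2)) * n) with hsdef
      set s' := Real.sqrt (2 * ((r1 - r2) * (1 - r2)) * (n + 1 : ℕ)) with hs'def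
      have hs : 0 ≤ s := Real.sqrt_nonneg _
      have hargn : (0:ℝ) ≤ 2 * ((r1 - r2) * (1 - r2)) * n := by positivity
      have hargn' : (0:ℝ) ≤ 2 * ((r1 - r2) * (1 - r2)) * (n + 1 : ℕ) := by positivity
      have hs' : s ≤ s' := by
        apply Real.sqrt_le_sqrt
        push_cast
        nlinarith
      have h2 : s' ^ 2 - s ^ 2 = 2 * ((r1 - r2) * (1 - r2)) := by
        rw [hsdef, hs'def, Real.sq_sqrt hargn, Real.sq_sqrt hargn']
        push_cast
        ring
      have hn : (0:ℝ) ≤ r2 * n := mul_nonneg hr2 (Nat.cast_nonneg n)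
      have hu : 0 ≤ W n - r2 * n := by linarith [hlow n]
      have hub : W n - r2 * n ≤ s + (r1 - r2) := by linarith [ih]
      have hdu : 0 < r1 - r2 + (W n - r2 * n) := by linarith
      have hmono : (r1 - r2) * (1 - r2) / (r1 - r2 + W n) ≤
          (r1 - r2) * (1 - r2) / (r1 - r2 + (W n - r2 * n)) := by
        apply div_le_div_of_nonneg_left (le_of_lt hc1) hdu
        linarith
      have haux := stmt_19_aux ((r1 - r2) * (1 - r2)) (r1 - r2) (W n - r2 * n) s s'
        hc1 hc2 hcc hu hub hs hs' h2
      rw [hrec n]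
      push_cast
      push_cast at haux hmono ⊢
      nlinarith [haux, hmono]
  intro n hn
  constructor
  · obtain ⟨m, rfl⟩ : ∃ m, n = m + 1 := ⟨n - 1, (Nat.succ_pred_eq_of_pos hn).symm⟩
    have hstep : 0 < (r1 - r2) * (1 - r2) / (r1 - r2 + W m) := div_pos hc1 (hden m)
    have := hlow m
    rw [hrec m]
    push_cast
    linarith
  · have := hup n
    have e : 2 * ((r1 - r2) * (1 - r2)) * (n:ℝ) = 2 * (r1 - r2) * (1 - r2) * n := by ring
    rw [e] at this
    exact this
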